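/- Let 𝒫 be a finite set of subsets of ℝ^d, each having nonempty interior. Then there exists λ > 0 such that for every tiling S of ℝ^d with prototile set 𝒫, every nonempty subset K ⊆ ℝ^d, and all u, v ∈ ℝ^d with |u| < λ and |v| < λ: if (S+u) ⊓ K = (S+v) ⊓ K, then u = v. (Here (S+u) ⊓ K denotes the set of tiles of S+u meeting K.) -/

import Mathlib

open ENNReal

noncomputable section

/-- Translation of a tiling: `T + u = {t + u | t ∈ T}`. -/
def transTiling {d : ℕ} (T : Set (Set (EuclideanSpace ℝ (Fin d))))
    (u : EuclideanSpace ℝ (Fin d)) : Set (Set (EuclideanSpace ℝ (Fin d))) :=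
  (fun s => (fun p => p + u) '' s) '' T

/-- `T ⊓ A = {t ∈ T | t ∩ A ≠ ∅}`, the tiles of `T` meeting `A`. -/
def meetsTiles {d : ℕ} (T : Set (Set (EuclideanSpace ℝ (Fin d))))
    (A : Set (EuclideanSpace ℝ (Fin d))) : Set (Set (EuclideanSpace ℝ (Fin d))) :=
  {t ∈ T | (t ∩ A).Nonempty}

/-- `T` is a tiling of `ℝ^d` with prototile set `P`. -/
def IsTiling {d : ℕ} (P : Set (Set (EuclideanSpace ℝ (Fin d))))
    (T : Set (Set (EuclideanSpace ℝ (Fin d)))) : Prop :=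
  (∀ t ∈ T, ∃ τ ∈ P, ∃ x : EuclideanSpace ℝ (Fin d), t = (fun p => p + x) '' τ) ∧
  (∀ t ∈ T, Nonempty
    (t ≃ₜ (Metric.closedBall (0 : EuclideanSpace ℝ (Fin d)) 1 : Set (EuclideanSpace ℝ (Fin d))))) ∧
  (⋃₀ T = Set.univ) ∧
  (∀ t₁ ∈ T, ∀ t₂ ∈ T, t₁ ≠ t₂ → interior t₁ ∩ interior t₂ = ∅)

/-- `d_r(T₁,T₂)`: the infimum of all `ε > 0` such that some `u` with `‖u‖ < ε` satisfies
`(T₁+u) ⊓ B̄_r = T₂ ⊓ B̄_r`, taken in `[0,∞]` (so `= ∞` if there is no such `ε`). -/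
def tilingDr {d : ℕ} (r : ℝ) (T₁ T₂ : Set (Set (EuclideanSpace ℝ (Fin d)))) : ℝ≥0∞ :=
  ⨅ (ε : ℝ) (_ : 0 < ε ∧ ∃ u : EuclideanSpace ℝ (Fin d), ‖u‖ < ε ∧
      meetsTiles (transTiling T₁ u) (Metric.closedBall 0 r)
        = meetsTiles T₂ (Metric.closedBall 0 r)),
    ENNReal.ofReal ε



lemma interior_image_addRight {d : ℕ} (x : EuclideanSpace ℝ (Fin d))
    (A : Set (EuclideanSpace ℝ (Fin d))) :
    interior ((fun p => p + x) '' A) = (fun p => p + x) '' interior A :=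
  ((Homeomorph.addRight x).image_interior A).symm

lemma compact_translate_ne {d : ℕ} (A : Set (EuclideanSpace ℝ (Fin d)))
    (hA : IsCompact A) (hne : A.Nonempty) (w : EuclideanSpace ℝ (Fin d)) (hw : w ≠ 0) :
    (fun p => p + w) '' A ≠ A := by
  intro h
  have hcont : ContinuousOn (fun y => (inner ℝ w y : ℝ)) A :=
    (continuous_const.inner continuous_id).continuousOn
  obtain ⟨x0, hx0, hmax⟩ := hA.exists_isMaxOn hne hcont
  have hx0w : x0 + w ∈ A := by
    rw [← h]; exact ⟨x0, hx0, rfl⟩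
  have h1 := hmax hx0w
  simp only [Set.mem_setOf_eq, inner_add_right] at h1
  have hpos : (0:ℝ) < inner ℝ w w := by
    rw [real_inner_self_eq_norm_mul_norm]
    exact mul_pos (norm_pos_iff.mpr hw) (norm_pos_iff.mpr hw)
  linarith [h1]


theorem stmt_16 {d : ℕ} (hd : 1 ≤ d) (P : Set (Set (EuclideanSpace ℝ (Fin d))))
    (hP : P.Finite) (hPint : ∀ τ ∈ P, (interior τ).Nonempty) :
    ∃ lam : ℝ, 0 < lam ∧
      ∀ S : Set (Set (EuclideanSpace ℝ (Fin d))), IsTiling P S →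
        ∀ K : Set (EuclideanSpace ℝ (Fin d)), K.Nonempty →
          ∀ u v : EuclideanSpace ℝ (Fin d), ‖u‖ < lam → ‖v‖ < lam →
            meetsTiles (transTiling S u) K = meetsTiles (transTiling S v) K → u = v := by
  classical
  have hball : ∀ τ ∈ P, ∃ r, 0 < r ∧ ∃ c, Metric.ball c r ⊆ interior τ := by
    intro τ hτ
    obtain ⟨c, hc⟩ := hPint τ hτ
    obtain ⟨r, hr, hsub⟩ := Metric.isOpen_iff.mp isOpen_interior c hc
    exact ⟨r, hr, c, hsub⟩
  choose! r hr c hc using hball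
  set F := hP.toFinset with hF
  by_cases hFne : F.Nonempty
  · refine ⟨F.inf' hFne r, ?_, ?_⟩
    · exact (Finset.lt_inf'_iff hFne).mpr (fun τ hτ => hr τ (hP.mem_toFinset.mp hτ))
    · intro S hS K hK u v hu hv heq
      by_contra hne
      set lam := F.inf' hFne r with hlam
      obtain ⟨k, hk⟩ := hK
      have hcov : k - u ∈ ⋃₀ S := by rw [hS.2.2.1]; trivial
      obtain ⟨s1, hs1, hks1⟩ := hcov
      set t := (fun p => p + u) '' s1 with ht
      have htu : t ∈ transTiling S u := ⟨s1, hs1, rfl⟩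
      have hkt : k ∈ t := ⟨k - u, hks1, by simp⟩
      have htm : t ∈ meetsTiles (transTiling S u) K := ⟨htu, k, hkt, hk⟩
      rw [heq] at htm
      obtain ⟨⟨s2, hs2, hts2⟩, -⟩ := htm
      set w := v - u with hw
      have hs12 : (fun p => p + w) '' s2 = s1 := by
        have h1 : (fun p => p + (-u)) '' ((fun p => p + u) '' s1)
            = (fun p => p + (-u)) '' ((fun p => p + v) '' s2) := by
          rw [← ht, ← hts2]
        simpa [Set.image_image, hw, sub_eq_add_neg, add_assoc, -Set.image_add_right] using h1.symm
      have hwne : w ≠ 0 := fun h => hne (by rwa [hw, sub_eq_zero, eq_comm] at h)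
      obtain ⟨e⟩ := hS.2.1 s2 hs2
      have hcs : CompactSpace (Metric.closedBall (0 : EuclideanSpace ℝ (Fin d)) 1 :
          Set (EuclideanSpace ℝ (Fin d))) :=
        isCompact_iff_compactSpace.mp (isCompact_closedBall 0 1)
      have hcomp : IsCompact s2 := by
        have : CompactSpace s2 := e.symm.compactSpace
        exact isCompact_iff_compactSpace.mpr this
      have hzmem : (0:EuclideanSpace ℝ (Fin d)) ∈ Metric.closedBall
          (0 : EuclideanSpace ℝ (Fin d)) 1 := by simp
      have hs2ne : s2.Nonempty := ⟨(e.symm ⟨0, hzmem⟩).1, (e.symm ⟨0, hzmem⟩).2⟩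
      have hne12 : s1 ≠ s2 := by
        intro h
        exact compact_translate_ne s2 hcomp hs2ne w hwne (hs12.trans h)
      obtain ⟨τ, hτ, x, hs2x⟩ := hS.1 s2 hs2
      have hlamr : lam ≤ r τ := Finset.inf'_le r (hP.mem_toFinset.mpr hτ)
      have hballτ : Metric.ball (c τ) lam ⊆ interior τ :=
        (Metric.ball_subset_ball hlamr).trans (hc τ hτ)
      have hint2 : interior s2 = (fun p => p + x) '' interior τ := by
        rw [hs2x, interior_image_addRight]
      have hint1 : interior s1 = (fun p => p + w) '' interior s2 := by
        rw [← hs12, interior_image_addRight]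
      have hwlt : ‖w‖ < 2 * lam := by
        calc ‖w‖ ≤ ‖v‖ + ‖u‖ := norm_sub_le v u
        _ < 2 * lam := by linarith
      set p := c τ + x + (2:ℝ)⁻¹ • w with hp
      have hhalf : ∀ s : ℝ, s = 1 ∨ s = -1 →
          c τ + s • ((2:ℝ)⁻¹ • w) ∈ Metric.ball (c τ) lam := by
        intro s hs
        rw [Metric.mem_ball, dist_eq_norm, add_sub_cancel_left, norm_smul, norm_smul]
        rcases hs with h | h <;> simp [h] <;> linarith
      have hp2 : p ∈ interior s2 := by
        rw [hint2]
        refine ⟨c τ + (2:ℝ)⁻¹ • w, hballτ ?_, by rw [hp]; abel⟩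
        simpa using hhalf 1 (Or.inl rfl)
      have hp1 : p ∈ interior s1 := by
        rw [hint1, hint2]
        refine ⟨c τ + (-1:ℝ) • ((2:ℝ)⁻¹ • w) + x, ⟨c τ + (-1:ℝ) • ((2:ℝ)⁻¹ • w),
          hballτ (hhalf (-1) (Or.inr rfl)), rfl⟩, ?_⟩
        rw [hp]; module
      have hdisj := hS.2.2.2 s1 hs1 s2 hs2 hne12
      exact absurd hdisj (by rw [Set.eq_empty_iff_forall_notMem]; push_neg; exact ⟨p, hp1, hp2⟩)
  · refine ⟨1, one_pos, ?_⟩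
    intro S hS K hK u v hu hv heq
    exfalso
    have : (0:EuclideanSpace ℝ (Fin d)) ∈ ⋃₀ S := by rw [hS.2.2.1]; trivial
    obtain ⟨s, hs, -⟩ := this
    obtain ⟨τ, hτ, -⟩ := hS.1 s hs
    exact hFne ⟨τ, hP.mem_toFinset.mpr hτ⟩
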